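/- Let M ∈ ℝ^{n×m} be a real matrix and let S₁, …, S_c ⊆ {1, …, n} be index sets whose union is all of {1, …, n}. For each k, let M_k denote the row-submatrix of M consisting of the rows of M whose index lies in S_k. Then ‖M‖_* ≤ ∑_{k=1}^c ‖M_k‖_*. -/

import Mathlib

/-- The nuclear norm of a real matrix `M`: the trace of the positive
semidefinite square root of `Mᵀ * M`. -/
noncomputable def nuclearNorm {m n : Type*} [Fintype m] [Fintype n] [DecidableEq n]
    (M : Matrix m n ℝ) : ℝ :=
  (((Matrix.posSemidef_conjTranspose_mul_self M).1.eigenvectorUnitary : Matrix n n ℝ) *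
    Matrix.diagonal ((RCLike.ofReal : ℝ → ℝ) ∘ (√·) ∘ (Matrix.posSemidef_conjTranspose_mul_self M).1.eigenvalues) *
    (star (Matrix.posSemidef_conjTranspose_mul_self M).1.eigenvectorUnitary : Matrix n n ℝ)).trace

/-- The row-submatrix of `M` consisting of the rows whose index lies in `S`. -/
def rowSubmatrix {n m : Type*} (M : Matrix n m ℝ) (S : Finset n) :
    Matrix {i // i ∈ S} m ℝ :=
  M.submatrix (fun i => (i : n)) id

open Matrix Finset
lemma dot_mulVec_pair {p q : Type*} [Fintype p] [Fintype q] (N W : Matrix p q ℝ)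
    (x y : q → ℝ) : x ⬝ᵥ ((Nᴴ * W) *ᵥ y) = (N *ᵥ x) ⬝ᵥ (W *ᵥ y) := by
  rw [← mulVec_mulVec, dotProduct_mulVec x, conjTranspose_eq_transpose_of_trivial,
    vecMul_transpose]

lemma dot_cs {q : Type*} [Fintype q] (u v : q → ℝ) :
    u ⬝ᵥ v ≤ Real.sqrt (u ⬝ᵥ u) * Real.sqrt (v ⬝ᵥ v) := by
  have h := Finset.sum_mul_sq_le_sq_mul_sq Finset.univ u v
  calc u ⬝ᵥ v ≤ |u ⬝ᵥ v| := le_abs_self _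
    _ = Real.sqrt ((u ⬝ᵥ v) ^ 2) := (Real.sqrt_sq_eq_abs _).symm
    _ ≤ Real.sqrt ((∑ i, u i ^ 2) * (∑ i, v i ^ 2)) :=
        Real.sqrt_le_sqrt (by simpa [dotProduct] using h)
    _ = _ := by
        rw [Real.sqrt_mul (by positivity)]
        simp [dotProduct, sq]

/-- trace of a square matrix via an orthonormal system. -/
lemma trace_eq_sum_dot {q : Type*} [Fintype q] [DecidableEq q] (B : Matrix q q ℝ)
    (v : q → q → ℝ) (hv : ∀ j l, v j ⬝ᵥ v l = if j = l then 1 else 0) :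
    B.trace = ∑ j, v j ⬝ᵥ (B *ᵥ v j) := by
  set V : Matrix q q ℝ := Matrix.of (fun a j => v j a) with hV
  have hVtV : Vᵀ * V = 1 := by
    ext j l
    simpa [Matrix.mul_apply, Matrix.one_apply, dotProduct, hV] using hv j l
  have hVVt : V * Vᵀ = 1 := mul_eq_one_comm.mp hVtV
  have : B.trace = (Vᵀ * B * V).trace := by
    rw [Matrix.trace_mul_cycle, hVVt, Matrix.one_mul]
  rw [this, Matrix.trace]
  refine Finset.sum_congr rfl fun j _ => ?_
  simp only [Matrix.diag_apply, Matrix.mul_apply, Matrix.transpose_apply, dotProduct,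
    Matrix.mulVec, hV, Matrix.of_apply, Finset.sum_mul, Finset.mul_sum]
  rw [Finset.sum_comm]
  exact Finset.sum_congr rfl fun a _ => Finset.sum_congr rfl fun b _ => by ring

/-- The nuclear norm equals the sum of the square roots of the eigenvalues of `Aᴴ * A`. -/
lemma nuclearNorm_eq_sum_sqrt {p q : Type*} [Fintype p] [Fintype q] [DecidableEq q]
    (A : Matrix p q ℝ) :
    nuclearNorm A = ∑ j, Real.sqrt ((Matrix.posSemidef_conjTranspose_mul_self A).1.eigenvalues j)
    := by
  set hA := (Matrix.posSemidef_conjTranspose_mul_self A).1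
  unfold nuclearNorm
  rw [Matrix.trace_mul_cycle]
  rw [show (star (hA.eigenvectorUnitary : Matrix q q ℝ)) *
      (hA.eigenvectorUnitary : Matrix q q ℝ) = 1 from
      Matrix.UnitaryGroup.star_mul_self _, Matrix.one_mul, Matrix.trace_diagonal]
  simp [RCLike.ofReal_real_eq_id]

lemma eigenvectorBasis_dot {q : Type*} [Fintype q] [DecidableEq q] {B : Matrix q q ℝ}
    (hB : B.IsHermitian) (j l : q) :
    ⇑(hB.eigenvectorBasis j) ⬝ᵥ ⇑(hB.eigenvectorBasis l) = if j = l then 1 else 0 := by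
  have h := (orthonormal_iff_ite (𝕜 := ℝ)).mp hB.eigenvectorBasis.orthonormal j l
  rw [PiLp.inner_apply] at h
  simpa [dotProduct, mul_comm] using h

/-- von Neumann-type upper bound: `tr (Aᴴ U) ≤ ‖A‖₊` when `U` is a contraction. -/
lemma trace_le_nuclearNorm {p q : Type*} [Fintype p] [Fintype q] [DecidableEq q]
    (A U : Matrix p q ℝ) (hU : ∀ y : q → ℝ, (U *ᵥ y) ⬝ᵥ (U *ᵥ y) ≤ y ⬝ᵥ y) :
    (Aᴴ * U).trace ≤ nuclearNorm A := by
  set hA := (Matrix.posSemidef_conjTranspose_mul_self A).1 with hAdef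
  set v : q → q → ℝ := fun j => ⇑(hA.eigenvectorBasis j) with hvdef
  have hv : ∀ j l, v j ⬝ᵥ v l = if j = l then 1 else 0 := fun j l => eigenvectorBasis_dot hA j l
  have hAv : ∀ j, (A *ᵥ v j) ⬝ᵥ (A *ᵥ v j) = hA.eigenvalues j := by
    intro j
    rw [← dot_mulVec_pair, hA.mulVec_eigenvectorBasis, dotProduct_smul, smul_eq_mul]
    have h := hv j j
    simp only [if_true, eq_self_iff_true] at h
    rw [h, mul_one]
  rw [trace_eq_sum_dot _ v hv, nuclearNorm_eq_sum_sqrt]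
  refine Finset.sum_le_sum fun j _ => ?_
  have h1 : v j ⬝ᵥ ((Aᴴ * U) *ᵥ v j) = (A *ᵥ v j) ⬝ᵥ (U *ᵥ v j) := dot_mulVec_pair A U _ _
  have h2 : (U *ᵥ v j) ⬝ᵥ (U *ᵥ v j) ≤ 1 := by
    have := hU (v j)
    have hvv := hv j j
    simp only [if_true, eq_self_iff_true] at hvv
    rwa [hvv] at this
  calc v j ⬝ᵥ ((Aᴴ * U) *ᵥ v j) = (A *ᵥ v j) ⬝ᵥ (U *ᵥ v j) := h1
    _ ≤ Real.sqrt ((A *ᵥ v j) ⬝ᵥ (A *ᵥ v j)) * Real.sqrt ((U *ᵥ v j) ⬝ᵥ (U *ᵥ v j)) := dot_cs _ _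
    _ ≤ Real.sqrt (hA.eigenvalues j) * 1 := by
        rw [hAv j]
        have h3 : Real.sqrt ((U *ᵥ v j) ⬝ᵥ (U *ᵥ v j)) ≤ 1 := by
          calc Real.sqrt ((U *ᵥ v j) ⬝ᵥ (U *ᵥ v j)) ≤ Real.sqrt 1 := Real.sqrt_le_sqrt h2
            _ = 1 := Real.sqrt_one
        exact mul_le_mul_of_nonneg_left h3 (Real.sqrt_nonneg _)
    _ = Real.sqrt (hA.eigenvalues j) := mul_one _

lemma exists_contraction_trace_eq {p q : Type*} [Fintype p] [Fintype q] [DecidableEq q]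
    (A : Matrix p q ℝ) :
    ∃ U : Matrix p q ℝ, (∀ y : q → ℝ, (U *ᵥ y) ⬝ᵥ (U *ᵥ y) ≤ y ⬝ᵥ y) ∧
      (Aᴴ * U).trace = nuclearNorm A := by
  set hA := (Matrix.posSemidef_conjTranspose_mul_self A).1 with hAdef
  set V : Matrix q q ℝ := (hA.eigenvectorUnitary : Matrix q q ℝ) with hVdef
  set W : Matrix q q ℝ := star V with hWdef
  have hWV : W * V = 1 := Matrix.UnitaryGroup.star_mul_self _
  have hVW : V * W = 1 := mul_eq_one_comm.mp hWV
  set lam := hA.eigenvalues with hlam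
  have hlam0 : ∀ j, 0 ≤ lam j := fun j =>
    (Matrix.posSemidef_conjTranspose_mul_self A).eigenvalues_nonneg j
  set g : q → ℝ := fun j => if lam j = 0 then 0 else (Real.sqrt (lam j))⁻¹ with hg
  have hspec : Aᴴ * A = V * Matrix.diagonal lam * W := by
    have := hA.spectral_theorem
    rw [RCLike.ofReal_real_eq_id] at this
    simp at this ⊢; exact this
  set P : Matrix q p ℝ := 0 with hPdummy
  refine ⟨A * (V * Matrix.diagonal g * W), ?_, ?_⟩
  · intro y
    set z : q → ℝ := W *ᵥ y with hz
    set d : q → ℝ := Matrix.diagonal g *ᵥ z with hd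
    have hwy : (V * Matrix.diagonal g * W) *ᵥ y = V *ᵥ d := by
      rw [← mulVec_mulVec, ← mulVec_mulVec]
    have hAw : (A * (V * Matrix.diagonal g * W)) *ᵥ y = A *ᵥ (V *ᵥ d) := by
      rw [← mulVec_mulVec, hwy]
    rw [hAw, ← dot_mulVec_pair A A, hspec]
    have hWVd : W *ᵥ (V *ᵥ d) = d := by
      rw [mulVec_mulVec, hWV, one_mulVec]
    have hexp : (V * Matrix.diagonal lam * W) *ᵥ (V *ᵥ d)
        = V *ᵥ (Matrix.diagonal lam *ᵥ d) := by
      rw [← mulVec_mulVec, ← mulVec_mulVec, hWVd]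
    rw [hexp]
    have hVV : (V *ᵥ d) ⬝ᵥ (V *ᵥ (Matrix.diagonal lam *ᵥ d))
        = d ⬝ᵥ (Matrix.diagonal lam *ᵥ d) := by
      rw [← dot_mulVec_pair V V]
      have : Vᴴ * V = 1 := by rw [← hWdef] at *; exact hWV
      rw [this, one_mulVec]
    rw [hVV]
    have hstep : d ⬝ᵥ (Matrix.diagonal lam *ᵥ d) ≤ z ⬝ᵥ z := by
      have hdj : ∀ j, d j = g j * z j := by
        intro j
        simp [hd, Matrix.mulVec_diagonal]
      have : d ⬝ᵥ (Matrix.diagonal lam *ᵥ d) = ∑ j, (g j * g j * lam j) * (z j * z j) := by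
        simp only [dotProduct, Matrix.mulVec_diagonal]
        exact Finset.sum_congr rfl fun j _ => by rw [hdj j]; ring
      rw [this]
      have hzz : z ⬝ᵥ z = ∑ j, z j * z j := rfl
      rw [hzz]
      refine Finset.sum_le_sum fun j _ => ?_
      have hgl : g j * g j * lam j ≤ 1 := by
        by_cases h : lam j = 0
        · simp [hg, h]
        · have hpos : 0 < lam j := lt_of_le_of_ne (hlam0 j) (Ne.symm h)
          have hs : Real.sqrt (lam j) * Real.sqrt (lam j) = lam j :=
            Real.mul_self_sqrt (hlam0 j)
          have hsp : 0 < Real.sqrt (lam j) := Real.sqrt_pos.mpr hpos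
          simp only [hg, if_neg h]
          rw [← mul_inv]
          rw [hs]
          rw [inv_mul_cancel₀ (ne_of_gt hpos)]
      have hz2 : 0 ≤ z j * z j := mul_self_nonneg _
      have hgl0 : 0 ≤ g j * g j * lam j := by
        have : 0 ≤ g j * g j := mul_self_nonneg _
        exact mul_nonneg this (hlam0 j)
      nlinarith
    refine hstep.trans ?_
    have : z ⬝ᵥ z = y ⬝ᵥ ((Wᴴ * W) *ᵥ y) := by
      rw [dot_mulVec_pair]
    rw [this]
    have hWW : Wᴴ * W = 1 := by
      rw [hWdef, star_eq_conjTranspose, conjTranspose_conjTranspose, ← star_eq_conjTranspose,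
        ← hWdef, hVW]
    rw [hWW, one_mulVec]
  · have hassoc : Aᴴ * (A * (V * Matrix.diagonal g * W))
        = (Aᴴ * A) * (V * Matrix.diagonal g * W) := by simp only [Matrix.mul_assoc]
    rw [hassoc, hspec]
    have hmid : V * Matrix.diagonal lam * W * (V * Matrix.diagonal g * W)
        = V * (Matrix.diagonal lam * (Matrix.diagonal g * W)) := by
      simp only [Matrix.mul_assoc]
      rw [show W * (V * (Matrix.diagonal g * W)) = Matrix.diagonal g * W by
        rw [← Matrix.mul_assoc, hWV, Matrix.one_mul]]
    rw [hmid, Matrix.trace_mul_comm]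
    have : Matrix.diagonal lam * (Matrix.diagonal g * W) * V
        = Matrix.diagonal lam * Matrix.diagonal g := by
      simp only [Matrix.mul_assoc]
      rw [show Matrix.diagonal g * (W * V) = Matrix.diagonal g by rw [hWV, Matrix.mul_one]]
    rw [this, Matrix.diagonal_mul_diagonal, Matrix.trace_diagonal, nuclearNorm_eq_sum_sqrt]
    refine Finset.sum_congr rfl fun j _ => ?_
    by_cases h : lam j = 0
    · rw [show (Matrix.posSemidef_conjTranspose_mul_self A).1.eigenvalues j = lam j from rfl, h,
        Real.sqrt_zero]
      simp [hg, h, Pi.mul_apply]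
    · simp only [Pi.mul_apply, hg, if_neg h]
      rw [← div_eq_mul_inv, Real.div_sqrt]

lemma trace_conjTranspose_mul {p q : Type*} [Fintype p] [Fintype q]
    (N P : Matrix p q ℝ) : (Nᴴ * P).trace = ∑ i, ∑ a, N i a * P i a := by
  rw [Matrix.trace]
  simp only [Matrix.diag_apply, Matrix.mul_apply, Matrix.conjTranspose_apply, star_trivial]
  rw [Finset.sum_comm]

theorem nuclearNorm_le_sum_rowSubmatrix (n m c : ℕ)
    (M : Matrix (Fin n) (Fin m) ℝ) (S : Fin c → Finset (Fin n))
    (hS : ∀ i : Fin n, ∃ k : Fin c, i ∈ S k) :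
    nuclearNorm M ≤ ∑ k : Fin c, nuclearNorm (rowSubmatrix M (S k)) := by
  classical
  obtain ⟨U, hUc, hUt⟩ := exists_contraction_trace_eq M
  rw [← hUt]
  set f : Fin n → Fin c := fun i => (hS i).choose with hf
  have hfS : ∀ i, i ∈ S (f i) := fun i => (hS i).choose_spec
  set Uk : (k : Fin c) → Matrix {i // i ∈ S k} (Fin m) ℝ :=
    fun k => Matrix.of (fun i a => if f (i : Fin n) = k then U (i : Fin n) a else 0) with hUk
  have hcontr : ∀ k, ∀ y : Fin m → ℝ, ((Uk k) *ᵥ y) ⬝ᵥ ((Uk k) *ᵥ y) ≤ y ⬝ᵥ y := by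
    intro k y
    refine le_trans ?_ (hUc y)
    have hrow : ∀ i : {i // i ∈ S k},
        ((Uk k) *ᵥ y) i = if f (i : Fin n) = k then (U *ᵥ y) (i : Fin n) else 0 := by
      intro i
      by_cases h : f (i : Fin n) = k <;>
        simp [hUk, Matrix.mulVec, dotProduct, h]
    have e1 : ((Uk k) *ᵥ y) ⬝ᵥ ((Uk k) *ᵥ y)
        = ∑ i : {i // i ∈ S k}, (if f (i : Fin n) = k then (U *ᵥ y) (i : Fin n) else 0) ^ 2 := by
      simp only [dotProduct, sq]
      exact Finset.sum_congr rfl fun i _ => by rw [hrow i]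
    rw [e1]
    have e2 : ∀ i : {i // i ∈ S k},
        (if f (i : Fin n) = k then (U *ᵥ y) (i : Fin n) else 0) ^ 2
          ≤ ((U *ᵥ y) (i : Fin n)) ^ 2 := by
      intro i
      by_cases h : f (i : Fin n) = k <;> simp [h] <;> positivity
    calc ∑ i : {i // i ∈ S k}, (if f (i : Fin n) = k then (U *ᵥ y) (i : Fin n) else 0) ^ 2
        ≤ ∑ i : {i // i ∈ S k}, ((U *ᵥ y) (i : Fin n)) ^ 2 := Finset.sum_le_sum fun i _ => e2 i
      _ = ∑ i ∈ S k, ((U *ᵥ y) i) ^ 2 := Finset.sum_coe_sort (S k) (fun i => ((U *ᵥ y) i) ^ 2)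
      _ ≤ ∑ i : Fin n, ((U *ᵥ y) i) ^ 2 :=
          Finset.sum_le_sum_of_subset_of_nonneg (Finset.subset_univ _)
            (fun i _ _ => by positivity)
      _ = (U *ᵥ y) ⬝ᵥ (U *ᵥ y) := by simp [dotProduct, sq]
  have hsplit : (Mᴴ * U).trace = ∑ k, ((rowSubmatrix M (S k))ᴴ * Uk k).trace := by
    simp only [trace_conjTranspose_mul]
    have hterm : ∀ k, (∑ i : {i // i ∈ S k}, ∑ a, rowSubmatrix M (S k) i a * Uk k i a)
        = ∑ i ∈ S k, (if f i = k then ∑ a, M i a * U i a else 0) := by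
      intro k
      rw [← Finset.sum_coe_sort (S k) (fun i => if f i = k then ∑ a, M i a * U i a else 0)]
      refine Finset.sum_congr rfl fun i _ => ?_
      by_cases h : f (i : Fin n) = k <;>
        simp [rowSubmatrix, Matrix.submatrix, hUk, h, Finset.mul_sum]
    simp only [hterm]
    have hswap : ∀ k, (∑ i ∈ S k, (if f i = k then ∑ a, M i a * U i a else 0))
        = ∑ i : Fin n, (if i ∈ S k ∧ f i = k then ∑ a, M i a * U i a else 0) := by
      intro k
      rw [← Finset.univ_inter (S k), ← Finset.sum_ite_mem]
      exact Finset.sum_congr rfl fun i _ => by simp [ite_and]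
    simp only [hswap]
    symm
    rw [Finset.sum_comm]
    refine Finset.sum_congr rfl fun i _ => ?_
    have hk : ∀ k : Fin c, (if i ∈ S k ∧ f i = k then (∑ a, M i a * U i a) else 0)
        = if k = f i then (∑ a, M i a * U i a) else 0 := by
      intro k
      by_cases hkk : k = f i
      · subst hkk; simp [hfS i]
      · have hna : ¬ (i ∈ S k ∧ f i = k) := fun h => hkk h.2.symm
        simp [hkk, hna]
    simp only [hk]
    rw [Finset.sum_ite_eq' Finset.univ (f i)]
    simp
  rw [hsplit]
  exact Finset.sum_le_sum fun k _ => trace_le_nuclearNorm _ _ (hcontr k)
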